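/- For every δ > 0 and for Lebesgue-almost every α ∈ (0,1), the series Σ_{k=2}^{∞} 1/( k·(log k)^{1+δ} · ‖kα‖ · |log ‖kα‖|^{1+δ} ) converges. -/

import Mathlib

open MeasureTheory Filter
open scoped ENNReal

/-- Distance from a real number to the nearest integer. -/
noncomputable def distToInt (t : ℝ) : ℝ := |t - round t|

lemma measurable_distToInt : Measurable distToInt := by
  have h : Measurable fun t : ℝ => ((round t : ℤ) : ℝ) := by
    simp_rw [round_eq]
    exact (measurable_from_top (f := (Int.cast : ℤ → ℝ))).comp
      (Int.measurable_floor.comp (measurable_id.add_const _))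
  exact (measurable_id.sub h).abs

lemma meas_le (n : ℕ) (hn : 1 ≤ n) (ε : ℝ) (hε : 0 ≤ ε) :
    volume ({α : ℝ | distToInt ((n:ℝ) * α) ≤ ε} ∩ Set.Ioo 0 1)
      ≤ ENNReal.ofReal (4 * ε) := by
  have hn0 : (0:ℝ) < n := by exact_mod_cast Nat.pos_of_ne_zero (by omega)
  have hsub : {α : ℝ | distToInt ((n:ℝ) * α) ≤ ε} ∩ Set.Ioo 0 1 ⊆
      ⋃ j ∈ Finset.range (n+1), Set.Icc (((j:ℝ) - ε)/n) (((j:ℝ) + ε)/n) := by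
    rintro α ⟨hd, h0, h1⟩
    simp only [Set.mem_setOf_eq] at hd
    set j : ℤ := round ((n:ℝ) * α) with hj
    have habs : |(n:ℝ)*α - j| ≤ ε := hd
    have hhalf : |(n:ℝ)*α - j| ≤ 1/2 := abs_sub_round _
    have hna0 : 0 < (n:ℝ)*α := by positivity
    have hna1 : (n:ℝ)*α < n := by nlinarith
    have hjlb : (0:ℤ) ≤ j := by
      by_contra hcon
      push_neg at hcon
      have h1' : (j:ℝ) ≤ -1 := by exact_mod_cast (by omega : j ≤ -1)
      have h2' := abs_le.mp hhalf
      linarith [h2'.1, h2'.2]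
    have hjub : j ≤ (n:ℤ) := by
      by_contra hcon
      push_neg at hcon
      have h1' : (n:ℝ) + 1 ≤ (j:ℝ) := by exact_mod_cast (by omega : (n:ℤ) + 1 ≤ j)
      have h2' := abs_le.mp hhalf
      linarith [h2'.1, h2'.2]
    have hmem : j.toNat ∈ Finset.range (n+1) := by
      simp only [Finset.mem_range]
      omega
    refine Set.mem_biUnion hmem ?_
    have hcast : ((j.toNat : ℕ) : ℝ) = (j:ℝ) := by exact_mod_cast congrArg Int.cast (Int.toNat_of_nonneg hjlb)
    rw [Set.mem_Icc, hcast]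
    have := abs_le.mp habs
    constructor
    · rw [div_le_iff₀ hn0]; linarith [this.2]
    · rw [le_div_iff₀ hn0]; linarith [this.1]
  calc volume ({α : ℝ | distToInt ((n:ℝ) * α) ≤ ε} ∩ Set.Ioo 0 1)
      ≤ volume (⋃ j ∈ Finset.range (n+1), Set.Icc (((j:ℝ) - ε)/n) (((j:ℝ) + ε)/n)) :=
        measure_mono hsub
    _ ≤ ∑ j ∈ Finset.range (n+1), volume (Set.Icc (((j:ℝ) - ε)/n) (((j:ℝ) + ε)/n)) :=
        measure_biUnion_finset_le _ _
    _ = ∑ j ∈ Finset.range (n+1), ENNReal.ofReal (2*ε/n) := by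
        refine Finset.sum_congr rfl fun j _ => ?_
        rw [Real.volume_Icc]
        congr 1
        field_simp
        ring
    _ = ((n+1 : ℕ) : ℝ≥0∞) * ENNReal.ofReal (2*ε/n) := by
        rw [Finset.sum_const, Finset.card_range, nsmul_eq_mul]
    _ ≤ ENNReal.ofReal (4 * ε) := by
        rw [← ENNReal.ofReal_natCast, ← ENNReal.ofReal_mul (by positivity)]
        refine ENNReal.ofReal_le_ofReal ?_
        push_cast
        rw [mul_div_assoc', div_le_iff₀ hn0]
        have h1 : (1:ℝ) ≤ (n:ℝ) := by exact_mod_cast hn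
        nlinarith [mul_nonneg hε (sub_nonneg.mpr h1)]

lemma exists_dyadic {t : ℝ} (h0 : 0 < t) (h2 : t ≤ 1/2) :
    ∃ m : ℕ, (1/2:ℝ)^(m+2) ≤ t ∧ t ≤ (1/2:ℝ)^(m+1) := by
  have hex : ∃ n : ℕ, (1/2:ℝ)^(n+2) < t := by
    obtain ⟨n, hn⟩ := exists_pow_lt_of_lt_one h0 (by norm_num : (1/2:ℝ) < 1)
    exact ⟨n, lt_of_le_of_lt (pow_le_pow_of_le_one (by norm_num) (by norm_num) (by omega)) hn⟩
  refine ⟨Nat.find hex, (Nat.find_spec hex).le, ?_⟩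
  cases hfind : Nat.find hex with
  | zero => simpa using h2
  | succ k =>
    have := Nat.find_min hex (by omega : k < Nat.find hex)
    push_neg at this
    exact this

lemma pointwise_bound {δ : ℝ} (hδ : 0 < δ) {t : ℝ} {m : ℕ}
    (hlo : (1/2:ℝ)^(m+2) ≤ t) (hhi : t ≤ (1/2:ℝ)^(m+1)) :
    1 / (t * |Real.log t| ^ (1+δ)) ≤ (2:ℝ)^(m+2) / (((m:ℝ)+1) * Real.log 2) ^ (1+δ) := by
  have ht0 : 0 < t := lt_of_lt_of_le (by positivity) hlo
  have hlog2 : (0:ℝ) < Real.log 2 := Real.log_pos (by norm_num)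
  have hL : ((m:ℝ)+1) * Real.log 2 ≤ |Real.log t| := by
    have h1 : Real.log t ≤ Real.log ((1/2:ℝ)^(m+1)) := Real.log_le_log ht0 hhi
    rw [Real.log_pow] at h1
    have : Real.log (1/2 : ℝ) = -Real.log 2 := by
      rw [one_div, Real.log_inv]
    rw [this] at h1
    push_cast at h1
    rw [abs_of_nonpos (by nlinarith)]
    nlinarith
  have hLpos : (0:ℝ) < ((m:ℝ)+1) * Real.log 2 := by positivity
  have hden : ((1/2:ℝ)^(m+2)) * (((m:ℝ)+1) * Real.log 2) ^ (1+δ) ≤ t * |Real.log t| ^ (1+δ) := by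
    refine mul_le_mul hlo ?_ (by positivity) (le_of_lt ht0)
    exact Real.rpow_le_rpow hLpos.le hL (by linarith)
  have hpos : (0:ℝ) < ((1/2:ℝ)^(m+2)) * (((m:ℝ)+1) * Real.log 2) ^ (1+δ) := by positivity
  calc 1 / (t * |Real.log t| ^ (1+δ))
      ≤ 1 / (((1/2:ℝ)^(m+2)) * (((m:ℝ)+1) * Real.log 2) ^ (1+δ)) :=
        one_div_le_one_div_of_le hpos hden
    _ = (2:ℝ)^(m+2) / (((m:ℝ)+1) * Real.log 2) ^ (1+δ) := by
        have h2 : ((1/2:ℝ))^(m+2) = ((2:ℝ)^(m+2))⁻¹ := by rw [one_div, inv_pow]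
        rw [h2, one_div, mul_inv, inv_inv, ← div_eq_mul_inv]

lemma shifted_pseries {δ : ℝ} (hδ : 0 < δ) :
    Summable (fun m : ℕ => 1 / ((m:ℝ)+1) ^ (1+δ)) := by
  have h := Real.summable_one_div_nat_rpow.mpr (by linarith : (1:ℝ) < 1+δ)
  have h2 := (summable_nat_add_iff 1).mpr h
  refine h2.congr fun m => ?_
  push_cast
  rfl

lemma Dsum : ∀ {δ : ℝ}, 0 < δ →
    Summable (fun m : ℕ => 8 / (((m:ℝ)+1) * Real.log 2) ^ (1+δ)) := by
  intro δ hδ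
  have hlog2 : (0:ℝ) < Real.log 2 := Real.log_pos (by norm_num)
  have h := ((shifted_pseries hδ).mul_left (8 / (Real.log 2) ^ (1+δ)))
  refine h.congr fun m => ?_
  rw [Real.mul_rpow (by positivity) hlog2.le]
  field_simp

lemma bertrand {δ : ℝ} (hδ : 0 < δ) :
    Summable (fun k : ℕ => 1 / (((k:ℝ)+2) * Real.log ((k:ℝ)+2) ^ (1+δ))) := by
  set f : ℕ → ℝ := fun k => 1 / (((k:ℝ)+2) * Real.log ((k:ℝ)+2) ^ (1+δ)) with hf
  have hpos : ∀ k : ℕ, (0:ℝ) < ((k:ℝ)+2) * Real.log ((k:ℝ)+2) ^ (1+δ) := by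
    intro k
    have h2 : (2:ℝ) ≤ (k:ℝ)+2 := by have := Nat.cast_nonneg (α:=ℝ) k; linarith
    have : (0:ℝ) < Real.log ((k:ℝ)+2) := Real.log_pos (by linarith)
    positivity
  have hnonneg : ∀ k, 0 ≤ f k := fun k => le_of_lt (one_div_pos.mpr (hpos k))
  have hmono : ∀ ⦃a b : ℕ⦄, 0 < a → a ≤ b → f b ≤ f a := by
    intro a b _ hab
    refine one_div_le_one_div_of_le (hpos a) ?_
    have hcast : ((a:ℝ)+2) ≤ ((b:ℝ)+2) := by
      have : (a:ℝ) ≤ b := by exact_mod_cast hab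
      linarith
    have hlog_nonneg : (0:ℝ) ≤ Real.log ((a:ℝ)+2) := Real.log_nonneg (by
      have := Nat.cast_nonneg (α:=ℝ) a; linarith)
    refine mul_le_mul hcast ?_ (by positivity) (by positivity)
    exact Real.rpow_le_rpow hlog_nonneg (Real.log_le_log (by positivity) hcast) (by linarith)
  rw [← summable_condensed_iff_of_nonneg hnonneg hmono]
  -- Summable fun k => 2^k * f (2^k)
  have hbound : ∀ k : ℕ, (2:ℝ)^(k+1) * f (2^(k+1)) ≤
      (1 / (Real.log 2) ^ (1+δ)) * (1 / ((k:ℝ)+1) ^ (1+δ)) := by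
    intro k
    have hlog2 : (0:ℝ) < Real.log 2 := Real.log_pos (by norm_num)
    have h2k : (0:ℝ) < (2:ℝ)^(k+1) := by positivity
    have hge : ((k:ℝ)+1) * Real.log 2 ≤ Real.log (((2^(k+1) : ℕ):ℝ)+2) := by
      have h1 : ((2:ℝ))^(k+1) ≤ ((2^(k+1):ℕ):ℝ)+2 := by push_cast; linarith
      have := Real.log_le_log (by positivity) h1
      rw [Real.log_pow] at this
      push_cast at this ⊢
      linarith
    have hLpos : (0:ℝ) < ((k:ℝ)+1) * Real.log 2 := by positivity
    have hden : ((2:ℝ)^(k+1)) * (((k:ℝ)+1) * Real.log 2) ^ (1+δ) ≤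
        (((2^(k+1):ℕ):ℝ)+2) * Real.log (((2^(k+1):ℕ):ℝ)+2) ^ (1+δ) := by
      refine mul_le_mul (by push_cast; linarith) ?_ (by positivity) (by positivity)
      exact Real.rpow_le_rpow hLpos.le hge (by linarith)
    have key : f (2^(k+1)) ≤ 1 / (((2:ℝ)^(k+1)) * (((k:ℝ)+1) * Real.log 2) ^ (1+δ)) := by
      rw [hf]
      exact one_div_le_one_div_of_le (by positivity) hden
    calc (2:ℝ)^(k+1) * f (2^(k+1))
        ≤ (2:ℝ)^(k+1) * (1 / (((2:ℝ)^(k+1)) * (((k:ℝ)+1) * Real.log 2) ^ (1+δ))) := by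
          exact mul_le_mul_of_nonneg_left key h2k.le
      _ = 1 / ((((k:ℝ)+1) * Real.log 2) ^ (1+δ)) := by
          field_simp
      _ = (1 / (Real.log 2) ^ (1+δ)) * (1 / ((k:ℝ)+1) ^ (1+δ)) := by
          rw [Real.mul_rpow (by positivity) hlog2.le]
          field_simp
  have hsum : Summable (fun k : ℕ => (2:ℝ)^(k+1) * f (2^(k+1))) := by
    refine Summable.of_nonneg_of_le (fun k => ?_) hbound
      (((shifted_pseries hδ).mul_left _))
    have := hnonneg (2^(k+1))
    positivity
  exact (summable_nat_add_iff 1).mp hsum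

lemma distToInt_nonneg (t : ℝ) : 0 ≤ distToInt t := abs_nonneg _

lemma distToInt_le_half (t : ℝ) : distToInt t ≤ 1/2 := abs_sub_round t

lemma measurable_hpart {δ : ℝ} (hδ : 0 < δ) (c : ℝ) :
    Measurable (fun α : ℝ => ENNReal.ofReal
      (1 / (distToInt (c * α) * |Real.log (distToInt (c * α))| ^ (1+δ)))) := by
  have hd : Measurable fun α : ℝ => distToInt (c * α) :=
    measurable_distToInt.comp (measurable_id.const_mul c)
  have h1 : Measurable fun α : ℝ => distToInt (c * α) *
      |Real.log (distToInt (c * α))| ^ (1+δ) :=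
    hd.mul ((Real.continuous_rpow_const (by linarith)).measurable.comp
      ((Real.measurable_log.comp hd).abs))
  exact (measurable_const.div h1).ennreal_ofReal

lemma integral_bound {δ : ℝ} (hδ : 0 < δ) (n : ℕ) (hn : 1 ≤ n) :
    ∫⁻ α in Set.Ioo (0:ℝ) 1, ENNReal.ofReal
        (1 / (distToInt ((n:ℝ) * α) * |Real.log (distToInt ((n:ℝ) * α))| ^ (1+δ))) ∂volume
      ≤ ∑' m : ℕ, ENNReal.ofReal (8 / (((m:ℝ)+1) * Real.log 2) ^ (1+δ)) := by
  set B : ℕ → Set ℝ := fun m =>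
    {α : ℝ | distToInt ((n:ℝ) * α) ∈ Set.Icc ((1/2:ℝ)^(m+2)) ((1/2:ℝ)^(m+1))} with hB
  have hd : Measurable fun α : ℝ => distToInt ((n:ℝ) * α) :=
    measurable_distToInt.comp (measurable_id.const_mul _)
  have hBmeas : ∀ m, MeasurableSet (B m) := fun m => hd measurableSet_Icc
  set c : ℕ → ℝ≥0∞ := fun m =>
    ENNReal.ofReal ((2:ℝ)^(m+2) / (((m:ℝ)+1) * Real.log 2) ^ (1+δ)) with hc
  have hpt : ∀ α : ℝ, ENNReal.ofReal
      (1 / (distToInt ((n:ℝ) * α) * |Real.log (distToInt ((n:ℝ) * α))| ^ (1+δ)))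
      ≤ ∑' m : ℕ, (B m).indicator (fun _ => c m) α := by
    intro α
    set t := distToInt ((n:ℝ) * α) with ht
    rcases eq_or_lt_of_le (distToInt_nonneg ((n:ℝ) * α)) with h0 | h0
    · rw [ht.trans h0.symm]
      simp
    · obtain ⟨m, hm1, hm2⟩ := exists_dyadic h0 (distToInt_le_half _)
      have hmem : α ∈ B m := ⟨hm1, hm2⟩
      have h1 : ENNReal.ofReal (1 / (t * |Real.log t| ^ (1+δ))) ≤ c m :=
        ENNReal.ofReal_le_ofReal (pointwise_bound hδ hm1 hm2)
      calc ENNReal.ofReal (1 / (t * |Real.log t| ^ (1+δ)))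
          ≤ c m := h1
        _ = (B m).indicator (fun _ => c m) α := (Set.indicator_of_mem hmem (fun _ => c m)).symm
        _ ≤ ∑' m' : ℕ, (B m').indicator (fun _ => c m') α := ENNReal.le_tsum m
  calc ∫⁻ α in Set.Ioo (0:ℝ) 1, ENNReal.ofReal
        (1 / (distToInt ((n:ℝ) * α) * |Real.log (distToInt ((n:ℝ) * α))| ^ (1+δ))) ∂volume
      ≤ ∫⁻ α in Set.Ioo (0:ℝ) 1, ∑' m : ℕ, (B m).indicator (fun _ => c m) α ∂volume :=
        lintegral_mono hpt
    _ = ∑' m : ℕ, ∫⁻ α in Set.Ioo (0:ℝ) 1, (B m).indicator (fun _ => c m) α ∂volume :=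
        lintegral_tsum fun m => (measurable_const.indicator (hBmeas m)).aemeasurable
    _ ≤ ∑' m : ℕ, ENNReal.ofReal (8 / (((m:ℝ)+1) * Real.log 2) ^ (1+δ)) := by
        refine ENNReal.tsum_le_tsum fun m => ?_
        rw [lintegral_indicator (hBmeas m), Measure.restrict_restrict (hBmeas m),
          setLIntegral_const]
        have hmeasle : volume (B m ∩ Set.Ioo 0 1) ≤ ENNReal.ofReal (4 * (1/2:ℝ)^(m+1)) := by
          refine le_trans (measure_mono ?_) (meas_le n hn ((1/2:ℝ)^(m+1)) (by positivity))
          exact Set.inter_subset_inter_left _ fun α hα => hα.2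
        calc c m * volume (B m ∩ Set.Ioo 0 1)
            ≤ c m * ENNReal.ofReal (4 * (1/2:ℝ)^(m+1)) :=
              mul_le_mul_right hmeasle _
          _ = ENNReal.ofReal ((2:ℝ)^(m+2) / (((m:ℝ)+1) * Real.log 2) ^ (1+δ)
                * (4 * (1/2:ℝ)^(m+1))) := by
              rw [hc, ← ENNReal.ofReal_mul (by positivity)]
          _ = ENNReal.ofReal (8 / (((m:ℝ)+1) * Real.log 2) ^ (1+δ)) := by
              congr 1
              rw [div_mul_eq_mul_div]
              congr 1
              have h1 : ((1/2:ℝ))^(m+1) = ((2:ℝ)^(m+1))⁻¹ := by rw [one_div, inv_pow]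
              rw [h1, pow_succ (2:ℝ) (m+1)]
              have h2 : ((2:ℝ)^(m+1)) ≠ 0 := by positivity
              field_simp
              ring

/-- For every `δ > 0` and Lebesgue-almost every `α ∈ (0,1)`, the series
`Σ_{k ≥ 2} 1/( k (log k)^{1+δ} · ‖kα‖ · |log ‖kα‖|^{1+δ} )` converges. -/
theorem stmt6 (δ : ℝ) (hδ : 0 < δ) :
    ∀ᵐ α ∂((volume : Measure ℝ).restrict (Set.Ioo 0 1)),
      Summable (fun k : ℕ =>
        1 / (((k : ℝ) + 2) * Real.log ((k : ℝ) + 2) ^ (1 + δ) *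
              distToInt (((k : ℝ) + 2) * α) *
              |Real.log (distToInt (((k : ℝ) + 2) * α))| ^ (1 + δ))) := by
  set μ := (volume : Measure ℝ).restrict (Set.Ioo 0 1) with hμ
  set g : ℕ → ℝ → ℝ≥0∞ := fun k α => ENNReal.ofReal
    (1 / (((k : ℝ) + 2) * Real.log ((k : ℝ) + 2) ^ (1 + δ) *
          distToInt (((k : ℝ) + 2) * α) *
          |Real.log (distToInt (((k : ℝ) + 2) * α))| ^ (1 + δ))) with hg
  have hck : ∀ k : ℕ, (0:ℝ) < ((k:ℝ)+2) * Real.log ((k:ℝ)+2) ^ (1+δ) := by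
    intro k
    have h2 : (2:ℝ) ≤ (k:ℝ)+2 := by have := Nat.cast_nonneg (α:=ℝ) k; linarith
    have := Real.log_pos (by linarith : (1:ℝ) < (k:ℝ)+2)
    positivity
  have hmeas : ∀ k, Measurable (g k) := by
    intro k
    have hd : Measurable fun α : ℝ => distToInt (((k:ℝ)+2) * α) :=
      measurable_distToInt.comp (measurable_id.const_mul _)
    have h1 : Measurable fun α : ℝ => ((k:ℝ)+2) * Real.log ((k:ℝ)+2) ^ (1+δ) *
        distToInt (((k:ℝ)+2) * α) * |Real.log (distToInt (((k:ℝ)+2) * α))| ^ (1+δ) :=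
      (hd.const_mul _).mul ((Real.continuous_rpow_const (by linarith)).measurable.comp
        ((Real.measurable_log.comp hd).abs))
    exact (measurable_const.div h1).ennreal_ofReal
  have hsplit : ∀ k α, g k α =
      ENNReal.ofReal (1 / (((k:ℝ)+2) * Real.log ((k:ℝ)+2) ^ (1+δ))) *
      ENNReal.ofReal (1 / (distToInt (((k:ℝ)+2) * α) *
        |Real.log (distToInt (((k:ℝ)+2) * α))| ^ (1+δ))) := by
    intro k α
    rw [hg, ← ENNReal.ofReal_mul (le_of_lt (one_div_pos.mpr (hck k)))]
    congr 1
    rw [div_mul_div_comm, one_mul]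
    congr 1
    ring
  have hintbound : ∀ k : ℕ, ∫⁻ α, g k α ∂μ ≤
      ENNReal.ofReal (1 / (((k:ℝ)+2) * Real.log ((k:ℝ)+2) ^ (1+δ))) *
      ∑' m : ℕ, ENNReal.ofReal (8 / (((m:ℝ)+1) * Real.log 2) ^ (1+δ)) := by
    intro k
    simp_rw [hsplit]
    rw [lintegral_const_mul _ (measurable_hpart hδ _)]
    refine mul_le_mul_right ?_ _
    have h := integral_bound hδ (k+2) (by omega)
    push_cast at h
    exact h
  have hC : (∑' m : ℕ, ENNReal.ofReal (8 / (((m:ℝ)+1) * Real.log 2) ^ (1+δ))) ≠ ⊤ := by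
    rw [← ENNReal.ofReal_tsum_of_nonneg (fun m => by
      exact div_nonneg (by norm_num) (Real.rpow_nonneg
        (mul_nonneg (by positivity) (Real.log_nonneg one_le_two)) (1+δ))) (Dsum hδ)]
    exact ENNReal.ofReal_ne_top
  have hBtop : (∑' k : ℕ, ENNReal.ofReal (1 / (((k:ℝ)+2) * Real.log ((k:ℝ)+2) ^ (1+δ)))) ≠ ⊤ := by
    rw [← ENNReal.ofReal_tsum_of_nonneg
      (fun k => le_of_lt (one_div_pos.mpr (hck k))) (bertrand hδ)]
    exact ENNReal.ofReal_ne_top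
  have key : ∫⁻ α, (∑' k, g k α) ∂μ ≠ ⊤ := by
    rw [lintegral_tsum (fun k => (hmeas k).aemeasurable)]
    have hle : (∑' k, ∫⁻ α, g k α ∂μ) ≤
        (∑' k : ℕ, ENNReal.ofReal (1 / (((k:ℝ)+2) * Real.log ((k:ℝ)+2) ^ (1+δ)))) *
        ∑' m : ℕ, ENNReal.ofReal (8 / (((m:ℝ)+1) * Real.log 2) ^ (1+δ)) := by
      rw [← ENNReal.tsum_mul_right]
      exact ENNReal.tsum_le_tsum hintbound
    exact ne_top_of_le_ne_top (ENNReal.mul_ne_top hBtop hC) hle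
  have hae := ae_lt_top (Measurable.ennreal_tsum hmeas) key
  filter_upwards [hae] with α hα
  have hsum := ENNReal.summable_toReal hα.ne
  refine hsum.congr fun k => ?_
  rw [hg]
  refine ENNReal.toReal_ofReal ?_
  refine one_div_nonneg.mpr ?_
  exact mul_nonneg (mul_nonneg (le_of_lt (hck k)) (distToInt_nonneg _))
    (Real.rpow_nonneg (abs_nonneg _) (1+δ))
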